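/- Conjugation of the reparametrizing automorphisms: assume the curve C, properly parametrized by ψ over K(α), satisfies C = C^{σᵢ} and C = C^{σⱼ}, where σᵢ, σⱼ are K-automorphisms of F sending α to conjugates αᵢ, αⱼ respectively. If τ is a K(α)-automorphism of F with τ(αᵢ) = αⱼ, then applying τ to the coefficients of the Möbius transformation uᵢ (the unique one with ψ = ψ^{σᵢ} ∘ uᵢ) yields uⱼ (the unique one with ψ = ψ^{σⱼ} ∘ uⱼ): τ(uᵢ) = uⱼ. -/

import Mathlib

open Polynomial

noncomputable section

/-- The Zariski closure of a subset of affine `m`-space over `F`. -/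
def zariskiClosure {F : Type*} [Field F] {m : ℕ} (S : Set (Fin m → F)) :
    Set (Fin m → F) :=
  {x | ∀ p : MvPolynomial (Fin m) F,
    (∀ s ∈ S, MvPolynomial.eval s p = 0) → MvPolynomial.eval x p = 0}

/-- A tuple of rational functions is defined at `t` if no denominator vanishes. -/
def definedAt {F : Type*} [Field F] {m : ℕ} (ψ : Fin m → RatFunc F) (t : F) : Prop :=
  ∀ i, (ψ i).denom.eval t ≠ 0

/-- The value of a tuple of rational functions at a parameter `t`. -/
def evalParam {F : Type*} [Field F] {m : ℕ} (ψ : Fin m → RatFunc F) (t : F) :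
    Fin m → F :=
  fun i => (ψ i).num.eval t / (ψ i).denom.eval t

/-- The affine image of a tuple of rational functions. -/
def paramImage {F : Type*} [Field F] {m : ℕ} (ψ : Fin m → RatFunc F) :
    Set (Fin m → F) :=
  {x | ∃ t : F, definedAt ψ t ∧ x = evalParam ψ t}

/-- Properness (generic injectivity, equivalent to birationality in characteristic
zero): only finitely many pairs of distinct parameters give the same point. -/
def GenericallyInjective {F : Type*} [Field F] {m : ℕ} (ψ : Fin m → RatFunc F) : Prop :=
  Set.Finite {p : F × F | p.1 ≠ p.2 ∧ definedAt ψ p.1 ∧ definedAt ψ p.2 ∧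
    evalParam ψ p.1 = evalParam ψ p.2}

/-- The coefficientwise conjugate of a rational function under a field
homomorphism `σ`. -/
def conjRatFunc {F : Type*} [Field F] (σ : F →+* F) (r : RatFunc F) : RatFunc F :=
  algebraMap F[X] (RatFunc F) (r.num.map σ) / algebraMap F[X] (RatFunc F) (r.denom.map σ)

/-- A rational function is a Möbius (fractional linear) transformation if it equals
`(at+b)/(ct+d)` with `ad - bc ≠ 0`. -/
def IsMobius {F : Type*} [Field F] (u : RatFunc F) : Prop :=
  ∃ a b c d : F, a * d - b * c ≠ 0 ∧
    u = algebraMap F[X] (RatFunc F) (C a * X + C b) /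
        algebraMap F[X] (RatFunc F) (C c * X + C d)

/-- Composition `χ ∘ u` of rational functions, by evaluation of `χ` at `u`. -/
def compRatFunc {F : Type*} [Field F] (χ u : RatFunc F) : RatFunc F :=
  RatFunc.eval (algebraMap F (RatFunc F)) u χ

end

noncomputable section
variable {F : Type*} [Field F]

/-- conj as a ring hom -/
def conjHom (σ : F →+* F) : RatFunc F →+* RatFunc F :=
  RatFunc.mapRingHom (Polynomial.mapRingHom σ) (fun p hp => by
    simp only [Submonoid.mem_comap, mem_nonZeroDivisors_iff_ne_zero] at *
    exact Polynomial.map_ne_zero_iff σ.injective |>.mpr hp)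

lemma conjHom_algebraMap (σ : F →+* F) (p : F[X]) :
    conjHom σ (algebraMap F[X] (RatFunc F) p) = algebraMap F[X] (RatFunc F) (p.map σ) := by
  have h : (algebraMap F[X] (RatFunc F) p) =
      algebraMap F[X] (RatFunc F) p / algebraMap F[X] (RatFunc F) 1 := by simp
  rw [conjHom, h, RatFunc.coe_mapRingHom_eq_coe_map, RatFunc.map_apply_div]
  simp

lemma conjRatFunc_eq_conjHom (σ : F →+* F) (r : RatFunc F) :
    conjRatFunc σ r = conjHom σ r := by
  conv_rhs => rw [← RatFunc.num_div_denom r]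
  rw [map_div₀, conjHom_algebraMap, conjHom_algebraMap, conjRatFunc]

lemma num_denom_of_monic_coprime {P Q : F[X]} (hQ : Q.Monic) (hcop : IsCoprime P Q) :
    (algebraMap F[X] (RatFunc F) P / algebraMap F[X] (RatFunc F) Q).num = P ∧
    (algebraMap F[X] (RatFunc F) P / algebraMap F[X] (RatFunc F) Q).denom = Q := by
  set x := algebraMap F[X] (RatFunc F) P / algebraMap F[X] (RatFunc F) Q with hx
  have hQ0 : Q ≠ 0 := hQ.ne_zero
  have hkey : x.num * Q = P * x.denom := (RatFunc.num_mul_eq_mul_denom_iff hQ0).mpr hx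
  have hcop' : IsCoprime x.num x.denom := RatFunc.isCoprime_num_denom x
  have hd1 : x.denom ∣ Q := by
    have : x.denom ∣ x.num * Q := ⟨P, by linear_combination hkey⟩
    exact (hcop'.symm.dvd_of_dvd_mul_left this)
  have hd2 : Q ∣ x.denom := by
    have : Q ∣ P * x.denom := ⟨x.num, by linear_combination -hkey⟩
    exact (hcop.symm.dvd_of_dvd_mul_left this)
  have hdeq : x.denom = Q :=
    Polynomial.eq_of_monic_of_associated (RatFunc.monic_denom x) hQ (associated_of_dvd_dvd hd1 hd2)
  refine ⟨?_, hdeq⟩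
  have := hkey
  rw [hdeq] at this
  exact mul_right_cancel₀ hQ0 this

lemma num_conj (σ : F →+* F) (r : RatFunc F) :
    (conjRatFunc σ r).num = r.num.map σ ∧ (conjRatFunc σ r).denom = r.denom.map σ := by
  rw [conjRatFunc]
  exact num_denom_of_monic_coprime ((RatFunc.monic_denom r).map σ)
    ((RatFunc.isCoprime_num_denom r).map (Polynomial.mapRingHom σ))

lemma conj_conj (σ σ' : F →+* F) (r : RatFunc F) :
    conjRatFunc σ (conjRatFunc σ' r) = conjRatFunc (σ.comp σ') r := by
  rw [conjRatFunc, (num_conj σ' r).1, (num_conj σ' r).2, conjRatFunc,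
    Polynomial.map_map, Polynomial.map_map]

lemma conj_id (r : RatFunc F) : conjRatFunc (RingHom.id F) r = r := by
  rw [conjRatFunc, Polynomial.map_id, Polynomial.map_id, RatFunc.num_div_denom]

lemma conjHom_comp_algebraMap (σ : F →+* F) :
    (conjHom σ).comp (algebraMap F (RatFunc F)) = (algebraMap F (RatFunc F)).comp σ := by
  ext a
  have h1 : algebraMap F (RatFunc F) a = algebraMap F[X] (RatFunc F) (C a) := by
    rw [IsScalarTower.algebraMap_apply F F[X] (RatFunc F), Polynomial.algebraMap_eq]
  have h2 : ∀ b : F, algebraMap F (RatFunc F) b = algebraMap F[X] (RatFunc F) (C b) := by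
    intro b
    rw [IsScalarTower.algebraMap_apply F F[X] (RatFunc F), Polynomial.algebraMap_eq]
  simp only [RingHom.comp_apply, h1, conjHom_algebraMap, Polynomial.map_C, h2]

lemma compRatFunc_eq (χ u : RatFunc F) :
    compRatFunc χ u = χ.num.eval₂ (algebraMap F (RatFunc F)) u /
      χ.denom.eval₂ (algebraMap F (RatFunc F)) u := rfl

lemma conj_comp (σ : F →+* F) (χ u : RatFunc F) :
    conjRatFunc σ (compRatFunc χ u) =
      compRatFunc (conjRatFunc σ χ) (conjRatFunc σ u) := by
  rw [compRatFunc_eq, compRatFunc_eq, (num_conj σ χ).1, (num_conj σ χ).2,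
    conjRatFunc_eq_conjHom σ, conjRatFunc_eq_conjHom σ u, map_div₀,
    Polynomial.hom_eval₂, Polynomial.hom_eval₂, conjHom_comp_algebraMap,
    ← Polynomial.eval₂_map, ← Polynomial.eval₂_map]

/-- Homogenized composition of a polynomial with a fractional linear expression. -/
def mobComp (N : ℕ) (P L1 L2 : F[X]) : F[X] :=
  ∑ k ∈ Finset.range (N + 1), C (P.coeff k) * L1 ^ k * L2 ^ (N - k)

lemma map_mobComp {L : Type*} [Field L] (φ : F[X] →+* L) {N : ℕ} {P L1 L2 : F[X]}
    (hL2 : φ L2 ≠ 0) (hN : P.natDegree < N + 1) :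
    φ (mobComp N P L1 L2) = P.eval₂ (φ.comp C) (φ L1 / φ L2) * φ L2 ^ N := by
  rw [mobComp, map_sum, Polynomial.eval₂_eq_sum_range' _ hN, Finset.sum_mul]
  refine Finset.sum_congr rfl fun k hk => ?_
  have hk' : k ≤ N := Nat.lt_succ_iff.mp (Finset.mem_range.mp hk)
  rw [map_mul, map_mul, map_pow, map_pow, RingHom.comp_apply, div_pow]
  have hsplit2 : φ L2 ^ N = φ L2 ^ k * φ L2 ^ (N - k) := by
    rw [← pow_add, Nat.add_sub_cancel' hk']
  rw [hsplit2]
  field_simp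

lemma aeval_mobius_ne_zero [IsAlgClosed F] {L1 L2 Q : F[X]} (hL2 : L2 ≠ 0)
    (hnc : ∀ e : F, L1 ≠ C e * L2) (hQ : Q ≠ 0) :
    Q.eval₂ (algebraMap F (RatFunc F)) (algebraMap F[X] (RatFunc F) L1 /
      algebraMap F[X] (RatFunc F) L2) ≠ 0 := by
  set u : RatFunc F := algebraMap F[X] (RatFunc F) L1 / algebraMap F[X] (RatFunc F) L2 with hu
  rw [← Polynomial.aeval_def]
  have hsplit : Q.Splits := IsAlgClosed.splits Q
  have hfac := hsplit.eq_prod_roots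
  rw [hfac, map_mul, Polynomial.aeval_C, map_multiset_prod, Multiset.map_map]
  refine mul_ne_zero ?_ (Multiset.prod_ne_zero ?_)
  · simpa using Polynomial.leadingCoeff_ne_zero.mpr hQ
  · simp only [Multiset.mem_map, Function.comp_apply, map_sub, Polynomial.aeval_X,
      Polynomial.aeval_C]
    rintro ⟨r, hr, heq⟩
    have hur : u = algebraMap F (RatFunc F) r := sub_eq_zero.mp heq
    have hCr : algebraMap F (RatFunc F) r = algebraMap F[X] (RatFunc F) (C r) := by
      rw [IsScalarTower.algebraMap_apply F F[X] (RatFunc F), Polynomial.algebraMap_eq]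
    rw [hu, hCr, div_eq_iff (RatFunc.algebraMap_ne_zero hL2), ← map_mul] at hur
    have hL1 : L1 = C r * L2 := RatFunc.algebraMap_injective F hur
    exact hnc r hL1

lemma algebraMap_comp_C :
    (algebraMap F[X] (RatFunc F)).comp C = algebraMap F (RatFunc F) := by
  ext a
  rw [RingHom.comp_apply, IsScalarTower.algebraMap_apply F F[X] (RatFunc F),
    Polynomial.algebraMap_eq]

lemma evalRingHom_comp_C (t : F) : (evalRingHom t).comp (C : F →+* F[X]) = RingHom.id F := by
  ext a
  simp

lemma mobComp_ne_zero [IsAlgClosed F] {L1 L2 Q : F[X]} {N : ℕ} (hL2 : L2 ≠ 0)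
    (hnc : ∀ e : F, L1 ≠ C e * L2) (hQ : Q ≠ 0) (hN : Q.natDegree < N + 1) :
    mobComp N Q L1 L2 ≠ 0 := by
  intro h0
  have hL2' : algebraMap F[X] (RatFunc F) L2 ≠ 0 := RatFunc.algebraMap_ne_zero hL2
  have := map_mobComp (algebraMap F[X] (RatFunc F)) hL2' hN (L1 := L1)
  rw [h0, map_zero, algebraMap_comp_C] at this
  exact mul_ne_zero (aeval_mobius_ne_zero hL2 hnc hQ) (pow_ne_zero _ hL2') this.symm

lemma eval_mobComp {N : ℕ} {P L1 L2 : F[X]} (t : F) (h2 : L2.eval t ≠ 0)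
    (hN : P.natDegree < N + 1) :
    (mobComp N P L1 L2).eval t = P.eval (L1.eval t / L2.eval t) * L2.eval t ^ N := by
  have := map_mobComp (evalRingHom t) (by simpa using h2) hN (L1 := L1) (P := P)
  simp only [coe_evalRingHom] at this
  rw [this, evalRingHom_comp_C]
  rfl

lemma eval_comp_eq [IsAlgClosed F] (r : RatFunc F) {L1 L2 L1' L2' : F[X]}
    (hL2 : L2 ≠ 0) (hnc : ∀ e : F, L1 ≠ C e * L2)
    (hL2' : L2' ≠ 0) (hnc' : ∀ e : F, L1' ≠ C e * L2')
    (hcomp : compRatFunc r (algebraMap F[X] (RatFunc F) L1 / algebraMap F[X] (RatFunc F) L2)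
      = compRatFunc r (algebraMap F[X] (RatFunc F) L1' / algebraMap F[X] (RatFunc F) L2'))
    {N : ℕ} (hN1 : r.num.natDegree < N + 1) (hN2 : r.denom.natDegree < N + 1)
    (t : F) (h2 : L2.eval t ≠ 0) (h2' : L2'.eval t ≠ 0)
    (hm : (mobComp N r.denom L1 L2).eval t ≠ 0)
    (hm' : (mobComp N r.denom L1' L2').eval t ≠ 0) :
    r.denom.eval (L1.eval t / L2.eval t) ≠ 0 ∧
    r.denom.eval (L1'.eval t / L2'.eval t) ≠ 0 ∧
    r.num.eval (L1.eval t / L2.eval t) / r.denom.eval (L1.eval t / L2.eval t)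
      = r.num.eval (L1'.eval t / L2'.eval t) / r.denom.eval (L1'.eval t / L2'.eval t) := by
  set C' := algebraMap F[X] (RatFunc F)
  have hQu : r.denom.eval₂ (algebraMap F (RatFunc F)) (C' L1 / C' L2) ≠ 0 :=
    aeval_mobius_ne_zero hL2 hnc r.denom_ne_zero
  have hQu' : r.denom.eval₂ (algebraMap F (RatFunc F)) (C' L1' / C' L2') ≠ 0 :=
    aeval_mobius_ne_zero hL2' hnc' r.denom_ne_zero
  rw [compRatFunc_eq, compRatFunc_eq, div_eq_div_iff hQu hQu'] at hcomp
  -- polynomial identity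
  have hstar : mobComp N r.num L1 L2 * mobComp N r.denom L1' L2'
      = mobComp N r.num L1' L2' * mobComp N r.denom L1 L2 := by
    apply RatFunc.algebraMap_injective F
    have e1 := map_mobComp C' (RatFunc.algebraMap_ne_zero hL2) hN1 (L1 := L1)
    have e2 := map_mobComp C' (RatFunc.algebraMap_ne_zero hL2') hN1 (L1 := L1')
    have e3 := map_mobComp C' (RatFunc.algebraMap_ne_zero hL2) hN2 (L1 := L1)
    have e4 := map_mobComp C' (RatFunc.algebraMap_ne_zero hL2') hN2 (L1 := L1')
    rw [algebraMap_comp_C] at e1 e2 e3 e4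
    rw [map_mul, map_mul, e1, e2, e3, e4]
    linear_combination (C' L2 ^ N * C' L2' ^ N) * hcomp
  have hev := congrArg (Polynomial.eval t) hstar
  rw [Polynomial.eval_mul, Polynomial.eval_mul,
    eval_mobComp t h2 hN1, eval_mobComp t h2' hN1,
    eval_mobComp t h2 hN2, eval_mobComp t h2' hN2] at hev
  have hqt : r.denom.eval (L1.eval t / L2.eval t) ≠ 0 := by
    intro h0
    rw [eval_mobComp t h2 hN2, h0, zero_mul] at hm
    exact hm rfl
  have hqt' : r.denom.eval (L1'.eval t / L2'.eval t) ≠ 0 := by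
    intro h0
    rw [eval_mobComp t h2' hN2, h0, zero_mul] at hm'
    exact hm' rfl
  refine ⟨hqt, hqt', ?_⟩
  rw [div_eq_div_iff hqt hqt']
  have hpow : L2.eval t ^ N * L2'.eval t ^ N ≠ 0 :=
    mul_ne_zero (pow_ne_zero _ h2) (pow_ne_zero _ h2')
  apply mul_right_cancel₀ hpow
  linear_combination hev

lemma linear_ne_zero' {c d : F} (h : c ≠ 0 ∨ d ≠ 0) : C c * X + C d ≠ (0 : F[X]) := by
  intro h0
  have h1 : (C c * X + C d).coeff 1 = 0 := by rw [h0]; simp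
  have h2 : (C c * X + C d).coeff 0 = 0 := by rw [h0]; simp
  simp [coeff_add, coeff_C_mul, coeff_C, coeff_X] at h1 h2
  rcases h with h | h
  · exact h h1
  · exact h h2

lemma mobius_L2_ne_zero {a b c d : F} (h : a * d - b * c ≠ 0) : C c * X + C d ≠ (0 : F[X]) := by
  apply linear_ne_zero'
  by_contra hcd
  push_neg at hcd
  rw [hcd.1, hcd.2] at h
  simp at h

lemma mobius_nc {a b c d : F} (h : a * d - b * c ≠ 0) :
    ∀ e : F, C a * X + C b ≠ C e * (C c * X + C d) := by
  intro e he
  have h1 := congrArg (fun p => Polynomial.coeff p 1) he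
  have h2 := congrArg (fun p => Polynomial.coeff p 0) he
  simp [coeff_add, coeff_C_mul, coeff_C, coeff_X, mul_add] at h1 h2
  rw [h1, h2] at h
  apply h
  ring

lemma mobius_unique [IsAlgClosed F] [Infinite F] {m : ℕ} (χ : Fin m → RatFunc F)
    (hχ : GenericallyInjective χ) {u u' : RatFunc F} (hu : IsMobius u) (hu' : IsMobius u')
    (h : ∀ i, compRatFunc (χ i) u = compRatFunc (χ i) u') : u = u' := by
  obtain ⟨a, b, c, d, hdet, rfl⟩ := hu
  obtain ⟨a', b', c', d', hdet', rfl⟩ := hu'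
  set C' := algebraMap F[X] (RatFunc F) with hC'
  set L1 : F[X] := C a * X + C b with hL1def
  set L2 : F[X] := C c * X + C d with hL2def
  set L1' : F[X] := C a' * X + C b' with hL1'def
  set L2' : F[X] := C c' * X + C d' with hL2'def
  by_contra hne
  have hL2 : L2 ≠ 0 := mobius_L2_ne_zero hdet
  have hL2' : L2' ≠ 0 := mobius_L2_ne_zero hdet'
  have hnc : ∀ e : F, L1 ≠ C e * L2 := mobius_nc hdet
  have hnc' : ∀ e : F, L1' ≠ C e * L2' := mobius_nc hdet'
  have hD : L1 * L2' - L1' * L2 ≠ 0 := by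
    intro h0
    apply hne
    rw [div_eq_div_iff (RatFunc.algebraMap_ne_zero hL2) (RatFunc.algebraMap_ne_zero hL2'),
      ← map_mul, ← map_mul]
    congr 1
    linear_combination h0
  set N : Fin m → ℕ := fun i => max (χ i).num.natDegree (χ i).denom.natDegree with hN
  have hN1 : ∀ i, (χ i).num.natDegree < N i + 1 :=
    fun i => Nat.lt_succ_of_le (le_max_left _ _)
  have hN2 : ∀ i, (χ i).denom.natDegree < N i + 1 :=
    fun i => Nat.lt_succ_of_le (le_max_right _ _)
  set R : F[X] := L2 * L2' * (L1 * L2' - L1' * L2) *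
    ∏ i : Fin m, (mobComp (N i) (χ i).denom L1 L2 * mobComp (N i) (χ i).denom L1' L2') with hR
  have hR0 : R ≠ 0 := by
    refine mul_ne_zero (mul_ne_zero (mul_ne_zero hL2 hL2') hD) ?_
    rw [Finset.prod_ne_zero_iff]
    intro i _
    exact mul_ne_zero (mobComp_ne_zero hL2 hnc (χ i).denom_ne_zero (hN2 i))
      (mobComp_ne_zero hL2' hnc' (χ i).denom_ne_zero (hN2 i))
  -- the good set is infinite
  have hGfin : Set.Finite {t : F | R.eval t = 0} := Polynomial.finite_setOf_isRoot hR0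
  have hGinf : Set.Infinite {t : F | R.eval t ≠ 0} := by
    exact hGfin.infinite_compl
  -- decompose goodness
  have hgood : ∀ t : F, R.eval t ≠ 0 →
      L2.eval t ≠ 0 ∧ L2'.eval t ≠ 0 ∧ (L1 * L2' - L1' * L2).eval t ≠ 0 ∧
      ∀ i, (mobComp (N i) (χ i).denom L1 L2).eval t ≠ 0 ∧
        (mobComp (N i) (χ i).denom L1' L2').eval t ≠ 0 := by
    intro t ht
    rw [hR] at ht
    simp only [Polynomial.eval_mul, Polynomial.eval_prod, mul_ne_zero_iff,
      Finset.prod_ne_zero_iff] at ht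
    exact ⟨ht.1.1.1, ht.1.1.2, ht.1.2, fun i => by
      have h3 := ht.2 i (Finset.mem_univ i)
      simpa only [Polynomial.eval_mul, mul_ne_zero_iff] using h3⟩
  -- map into the collision set
  set g : F → F × F := fun t => (L1.eval t / L2.eval t, L1'.eval t / L2'.eval t) with hg
  have hsub : g '' {t : F | R.eval t ≠ 0} ⊆
      {p : F × F | p.1 ≠ p.2 ∧ definedAt χ p.1 ∧ definedAt χ p.2 ∧
        evalParam χ p.1 = evalParam χ p.2} := by
    rintro _ ⟨t, ht, rfl⟩
    obtain ⟨h2, h2', hDt, hmm⟩ := hgood t ht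
    have key := fun i => eval_comp_eq (χ i) hL2 hnc hL2' hnc' (h i) (hN1 i) (hN2 i)
      t h2 h2' (hmm i).1 (hmm i).2
    refine ⟨?_, fun i => (key i).1, fun i => (key i).2.1, ?_⟩
    · intro heq
      simp only [hg] at heq
      rw [div_eq_div_iff h2 h2'] at heq
      apply hDt
      rw [Polynomial.eval_sub, Polynomial.eval_mul, Polynomial.eval_mul]
      linear_combination heq
    · funext i
      exact (key i).2.2
  have hinj : Set.InjOn g {t : F | R.eval t ≠ 0} := by
    intro t1 ht1 t2 ht2 heq
    obtain ⟨h21, -, -, -⟩ := hgood t1 ht1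
    obtain ⟨h22, -, -, -⟩ := hgood t2 ht2
    have h1 := congrArg Prod.fst heq
    simp only [hg] at h1
    rw [div_eq_div_iff h21 h22] at h1
    simp only [hL1def, hL2def, Polynomial.eval_add, Polynomial.eval_mul, Polynomial.eval_C,
      Polynomial.eval_X] at h1
    have : (a * d - b * c) * (t1 - t2) = 0 := by linear_combination h1
    rcases mul_eq_zero.mp this with h | h
    · exact absurd h hdet
    · exact sub_eq_zero.mp h
  exact (hGinf.image hinj) (hχ.subset hsub)

lemma conj_mobius (σ : F →+* F) {u : RatFunc F} (hu : IsMobius u) :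
    IsMobius (conjRatFunc σ u) := by
  obtain ⟨a, b, c, d, hdet, rfl⟩ := hu
  refine ⟨σ a, σ b, σ c, σ d, ?_, ?_⟩
  · intro h0
    apply hdet
    have : σ (a * d - b * c) = 0 := by rw [map_sub, map_mul, map_mul]; exact h0
    exact (_root_.map_eq_zero σ).mp this
  · rw [conjRatFunc_eq_conjHom, map_div₀, conjHom_algebraMap, conjHom_algebraMap]
    simp only [Polynomial.map_add, Polynomial.map_mul, Polynomial.map_C, Polynomial.map_X]

lemma conj_congr {σ₁ σ₂ : F →+* F} {r : RatFunc F}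
    (h1 : ∀ k, σ₁ (r.num.coeff k) = σ₂ (r.num.coeff k))
    (h2 : ∀ k, σ₁ (r.denom.coeff k) = σ₂ (r.denom.coeff k)) :
    conjRatFunc σ₁ r = conjRatFunc σ₂ r := by
  rw [conjRatFunc, conjRatFunc]
  congr 1 <;> congr 1 <;> (ext k; simp only [Polynomial.coeff_map]) 
  · exact h1 k
  · exact h2 k

lemma algHom_agree_on_adjoin {K : Type*} [Field K] [Algebra K F] (α : F)
    (φ ρ : F →ₐ[K] F) (h : φ α = ρ α) :
    ∀ x ∈ IntermediateField.adjoin K {α}, φ x = ρ x := by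
  intro x hx
  refine IntermediateField.adjoin_induction K (fun y hy => ?_) (fun y => ?_)
    (fun y z _ _ hy hz => ?_) (fun y _ hy => ?_) (fun y z _ _ hy hz => ?_) hx
  · rcases hy with rfl; exact h
  · rw [φ.commutes, ρ.commutes]
  · rw [map_add, map_add, hy, hz]
  · rw [map_inv₀, map_inv₀, hy]
  · rw [map_mul, map_mul, hy, hz]

end

open IntermediateField in
theorem conjugate_of_reparametrizing_mobius' {K F : Type*} [Field K] [Field F]
    [IsAlgClosed F] [CharZero F] [Algebra K F] {m : ℕ} (α : F)
    (σi σj τ : F ≃ₐ[K] F) (hτα : τ α = α) (hτ : τ (σi α) = σj α)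
    (ψ : Fin m → RatFunc F) (hψ : GenericallyInjective ψ)
    (hcoeff : ∀ i k, (ψ i).num.coeff k ∈ K⟮α⟯ ∧ (ψ i).denom.coeff k ∈ K⟮α⟯)
    (ui uj : RatFunc F) (hui : IsMobius ui) (huj : IsMobius uj)
    (hψi : ∀ i, ψ i = compRatFunc (conjRatFunc (σi : F →+* F) (ψ i)) ui)
    (hψj : ∀ i, ψ i = compRatFunc (conjRatFunc (σj : F →+* F) (ψ i)) uj) :
    conjRatFunc (τ : F →+* F) ui = uj := by
  -- τ ∘ σi agrees with σj on K⟮α⟯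
  have hts : ∀ x ∈ K⟮α⟯, τ (σi x) = σj x := by
    have := algHom_agree_on_adjoin α (τ.toAlgHom.comp σi.toAlgHom) σj.toAlgHom
      (by simpa using hτ)
    simpa using this
  -- τ fixes K⟮α⟯
  have htfix : ∀ x ∈ K⟮α⟯, τ x = x := by
    have := algHom_agree_on_adjoin α τ.toAlgHom (AlgHom.id K F) (by simpa using hτα)
    simpa using this
  -- conj τ (conj σi (ψ i)) = conj σj (ψ i)
  have h1 : ∀ i, conjRatFunc (τ : F →+* F) (conjRatFunc (σi : F →+* F) (ψ i))
      = conjRatFunc (σj : F →+* F) (ψ i) := by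
    intro i
    rw [conj_conj]
    exact conj_congr (fun k => hts _ (hcoeff i k).1) (fun k => hts _ (hcoeff i k).2)
  -- conj τ (ψ i) = ψ i
  have h2 : ∀ i, conjRatFunc (τ : F →+* F) (ψ i) = ψ i := by
    intro i
    have := conj_congr (σ₁ := (τ : F →+* F)) (σ₂ := RingHom.id F) (r := ψ i)
      (fun k => by simpa using htfix _ (hcoeff i k).1)
      (fun k => by simpa using htfix _ (hcoeff i k).2)
    rw [this, conj_id]
  -- apply τ to hψi
  have h3 : ∀ i, ψ i = compRatFunc (conjRatFunc (σj : F →+* F) (ψ i))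
      (conjRatFunc (τ : F →+* F) ui) := by
    intro i
    conv_lhs => rw [← h2 i, hψi i]
    rw [conj_comp, h1 i]
  -- cancel σj: apply conj σj.symm
  have hcancel : ∀ r : RatFunc F,
      conjRatFunc (σj.symm : F →+* F) (conjRatFunc (σj : F →+* F) r) = r := by
    intro r
    rw [conj_conj]
    have : ((σj.symm : F →+* F).comp (σj : F →+* F)) = RingHom.id F := by
      ext x; simp
    rw [this, conj_id]
  have hcancel' : ∀ r : RatFunc F,
      conjRatFunc (σj : F →+* F) (conjRatFunc (σj.symm : F →+* F) r) = r := by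
    intro r
    rw [conj_conj]
    have : ((σj : F →+* F).comp (σj.symm : F →+* F)) = RingHom.id F := by
      ext x; simp
    rw [this, conj_id]
  have h4 : ∀ i, compRatFunc (ψ i)
      (conjRatFunc (σj.symm : F →+* F) (conjRatFunc (τ : F →+* F) ui))
      = compRatFunc (ψ i) (conjRatFunc (σj.symm : F →+* F) uj) := by
    intro i
    have e1 := congrArg (conjRatFunc (σj.symm : F →+* F)) (h3 i)
    have e2 := congrArg (conjRatFunc (σj.symm : F →+* F)) (hψj i)
    rw [conj_comp, hcancel] at e1 e2
    rw [← e1, ← e2]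
  have hmob1 : IsMobius (conjRatFunc (σj.symm : F →+* F) (conjRatFunc (τ : F →+* F) ui)) :=
    conj_mobius _ (conj_mobius _ hui)
  have hmob2 : IsMobius (conjRatFunc (σj.symm : F →+* F) uj) := conj_mobius _ huj
  have := mobius_unique ψ hψ hmob1 hmob2 h4
  have := congrArg (conjRatFunc (σj : F →+* F)) this
  rwa [hcancel', hcancel'] at this


open IntermediateField in
/-- Conjugation of the reparametrizing automorphisms: if `C = C^{σᵢ} = C^{σⱼ}` and
`τ` is a `K(α)`-automorphism with `τ(σᵢ(α)) = σⱼ(α)`, then applying `τ` to the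
coefficients of the Möbius transformation `uᵢ` (with `ψ = ψ^{σᵢ} ∘ uᵢ`) yields `uⱼ`
(the one with `ψ = ψ^{σⱼ} ∘ uⱼ`). -/
theorem conjugate_of_reparametrizing_mobius {K F : Type*} [Field K] [Field F]
    [IsAlgClosed F] [CharZero F] [Algebra K F] {m : ℕ} (α : F)
    (σi σj τ : F ≃ₐ[K] F) (hτα : τ α = α) (hτ : τ (σi α) = σj α)
    (ψ : Fin m → RatFunc F) (hψ : GenericallyInjective ψ)
    (hcoeff : ∀ i k, (ψ i).num.coeff k ∈ K⟮α⟯ ∧ (ψ i).denom.coeff k ∈ K⟮α⟯)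
    (hCi : zariskiClosure (paramImage ψ)
      = zariskiClosure (paramImage fun i => conjRatFunc (σi : F →+* F) (ψ i)))
    (hCj : zariskiClosure (paramImage ψ)
      = zariskiClosure (paramImage fun i => conjRatFunc (σj : F →+* F) (ψ i)))
    (ui uj : RatFunc F) (hui : IsMobius ui) (huj : IsMobius uj)
    (hψi : ∀ i, ψ i = compRatFunc (conjRatFunc (σi : F →+* F) (ψ i)) ui)
    (hψj : ∀ i, ψ i = compRatFunc (conjRatFunc (σj : F →+* F) (ψ i)) uj) :
    conjRatFunc (τ : F →+* F) ui = uj :=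
  conjugate_of_reparametrizing_mobius' α σi σj τ hτα hτ ψ hψ hcoeff ui uj hui huj hψi hψj
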